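/- Let ρ ∈ (0,1], let M be a finite set, and let (S_i)_{i ∈ I} be a nonempty family of subsets of M with |S_i| ≥ ρ·|M| for all i ∈ I. Set k(ρ) := ⌈ρ⁻¹⌉ + 1 and t(ρ) := ρ / Δ_{k(ρ)−1}, where Δ_n := n(n+1)/2 is the n-th triangle number. Then there exists i ∈ I such that for at least (|I| − (k(ρ)−1)) / (k(ρ)−1) many indices j ∈ I \ {i}, one has |S_i ∩ S_j| ≥ t(ρ)·|M|. -/

import Mathlib

open Finset

private lemma bonf {I M : Type} [DecidableEq I] [DecidableEq M] (S : I → Finset M) (T : Finset I) :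
    2 * ∑ i ∈ T, (S i).card ≤ 2 * (T.biUnion S).card + ∑ p ∈ T.offDiag, ((S p.1) ∩ (S p.2)).card := by
  classical
  induction T using Finset.induction_on with
  | empty => simp
  | @insert a T ha ih =>
    have hsum : ∑ i ∈ insert a T, (S i).card = (S a).card + ∑ i ∈ T, (S i).card :=
      Finset.sum_insert ha
    have hbu : (insert a T).biUnion S = S a ∪ T.biUnion S := Finset.biUnion_insert
    have hcap : (S a) ∩ (T.biUnion S) = T.biUnion (fun i => S a ∩ S i) :=
      Finset.inter_biUnion (S a) T S
    have h1 : (S a ∩ T.biUnion S).card ≤ ∑ i ∈ T, (S a ∩ S i).card := by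
      rw [hcap]; exact Finset.card_biUnion_le
    have key : (S a ∪ T.biUnion S).card + (S a ∩ T.biUnion S).card
        = (S a).card + (T.biUnion S).card := Finset.card_union_add_card_inter _ _
    have hd1 : Disjoint (T.offDiag ∪ {a} ×ˢ T) (T ×ˢ {a}) := by
      simp only [Finset.disjoint_left, Finset.mem_union, Finset.mem_offDiag,
        Finset.mem_product, Finset.mem_singleton]
      rintro ⟨x, y⟩ h ⟨hx, hy⟩
      subst hy
      rcases h with ⟨-, h, -⟩ | ⟨-, h⟩ <;> exact ha h
    have hd2 : Disjoint T.offDiag ({a} ×ˢ T) := by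
      simp only [Finset.disjoint_left, Finset.mem_offDiag, Finset.mem_product,
        Finset.mem_singleton]
      rintro ⟨x, y⟩ ⟨hx, -, -⟩ ⟨hx', -⟩
      subst hx'; exact ha hx
    have hod : ∑ p ∈ (insert a T).offDiag, ((S p.1) ∩ (S p.2)).card
        = ∑ p ∈ T.offDiag, ((S p.1) ∩ (S p.2)).card
          + ∑ i ∈ T, (S a ∩ S i).card + ∑ i ∈ T, (S i ∩ S a).card := by
      rw [Finset.offDiag_insert ha, Finset.sum_union hd1, Finset.sum_union hd2]
      simp [Finset.sum_product, Finset.sum_product']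
    have heq : ∑ i ∈ T, (S i ∩ S a).card = ∑ i ∈ T, (S a ∩ S i).card := by
      apply Finset.sum_congr rfl; intro i _; rw [Finset.inter_comm]
    rw [hsum, hbu, hod, heq]
    omega



/-- Lemma on intersections of non-negligible subsets, part (2).
Here `k(ρ) = ⌈ρ⁻¹⌉ + 1` (so `k(ρ) - 1 = ⌈ρ⁻¹⌉`) and
`t(ρ) = ρ / Δ_{k(ρ)-1} = ρ / (⌈ρ⁻¹⌉(⌈ρ⁻¹⌉+1)/2)`. -/
theorem stmt_10 (ρ : ℝ) (hρ0 : 0 < ρ) (hρ1 : ρ ≤ 1)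
    (M : Type) [Fintype M] [DecidableEq M]
    (I : Type) [Fintype I] [Nonempty I] (S : I → Finset M)
    (hS : ∀ i : I, ρ * (Fintype.card M : ℝ) ≤ ((S i).card : ℝ)) :
    ∃ i : I, ((Fintype.card I : ℝ) - (⌈ρ⁻¹⌉₊ : ℝ)) / (⌈ρ⁻¹⌉₊ : ℝ) ≤
      (Nat.card {j : I // j ≠ i ∧
        ρ / ((⌈ρ⁻¹⌉₊ : ℝ) * ((⌈ρ⁻¹⌉₊ : ℝ) + 1) / 2) * (Fintype.card M : ℝ)
          ≤ ((S i ∩ S j).card : ℝ)} : ℝ) := by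
  classical
  set K := ⌈ρ⁻¹⌉₊ with hKdef
  have hK1 : 1 ≤ K := Nat.one_le_ceil_iff.mpr (by positivity)
  have hK0R : (0:ℝ) < K := by exact_mod_cast hK1
  set m : ℝ := (Fintype.card M : ℝ) with hmdef
  have hm0 : 0 ≤ m := Nat.cast_nonneg _
  set t : ℝ := ρ / ((K:ℝ) * ((K:ℝ) + 1) / 2) with htdef
  have hkρ : 1 ≤ (K:ℝ) * ρ := by
    have h := Nat.le_ceil ρ⁻¹
    rw [← hKdef] at h
    rw [inv_eq_one_div, div_le_iff₀ hρ0] at h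
    linarith
  set P : Finset I → Prop :=
    fun A => ∀ i ∈ A, ∀ j ∈ A, i ≠ j → ((S i ∩ S j).card : ℝ) < t * m with hPdef
  -- no independent set of size K+1
  have hnoind : ∀ B : Finset I, B.card = K + 1 → ¬ P B := by
    intro B hB hP
    have h2 : 1 < B.card := by omega
    obtain ⟨x, hx, y, hy, hxy⟩ := Finset.one_lt_card.mp h2
    have hne : B.offDiag.Nonempty := ⟨(x, y), Finset.mem_offDiag.mpr ⟨hx, hy, hxy⟩⟩
    have hb := bonf S B
    have hbR : 2 * ∑ i ∈ B, ((S i).card : ℝ)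
        ≤ 2 * ((B.biUnion S).card : ℝ) + ∑ p ∈ B.offDiag, ((S p.1 ∩ S p.2).card : ℝ) := by
      exact_mod_cast hb
    have h1 : ((K:ℝ) + 1) * (ρ * m) ≤ ∑ i ∈ B, ((S i).card : ℝ) := by
      calc ((K:ℝ) + 1) * (ρ * m) = ∑ _i ∈ B, ρ * m := by
            rw [Finset.sum_const, hB]; push_cast; ring
        _ ≤ _ := Finset.sum_le_sum fun i _ => hS i
    have h3 : ∑ p ∈ B.offDiag, ((S p.1 ∩ S p.2).card : ℝ) < ∑ _p ∈ B.offDiag, t * m := by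
      refine Finset.sum_lt_sum_of_nonempty hne fun p hp => ?_
      obtain ⟨hp1, hp2, hp3⟩ := Finset.mem_offDiag.mp hp
      exact hP p.1 hp1 p.2 hp2 hp3
    have hcardN : B.offDiag.card = (K + 1) * K := by
      rw [Finset.offDiag_card, hB]
      have : (K + 1) * (K + 1) = (K + 1) * K + (K + 1) := by ring
      omega
    have h4 : ∑ _p ∈ B.offDiag, t * m = ((K:ℝ) + 1) * (K:ℝ) * (t * m) := by
      rw [Finset.sum_const, hcardN, nsmul_eq_mul]; push_cast; ring
    have h5 : ((B.biUnion S).card : ℝ) ≤ m := by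
      rw [hmdef]; exact_mod_cast Finset.card_le_univ _
    have htval : ((K:ℝ) + 1) * (K:ℝ) * (t * m) = 2 * (ρ * m) := by
      rw [htdef]; field_simp
    rw [h4, htval] at h3
    nlinarith [mul_nonneg (sub_nonneg.mpr hkρ) hm0]
  -- maximal independent set
  have i0 : I := Classical.arbitrary I
  have hsingle : ∀ i : I, P {i} := by
    intro i a ha b hb hab
    rw [Finset.mem_singleton] at ha hb
    exact absurd (ha.trans hb.symm) hab
  have h𝒜ne : ((Finset.univ : Finset (Finset I)).filter P).Nonempty :=
    ⟨{i0}, Finset.mem_filter.mpr ⟨Finset.mem_univ _, hsingle i0⟩⟩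
  obtain ⟨A, hA𝒜, hAmax⟩ :=
    Finset.exists_max_image ((Finset.univ : Finset (Finset I)).filter P) Finset.card h𝒜ne
  have hPA : P A := (Finset.mem_filter.mp hA𝒜).2
  have hA1 : 1 ≤ A.card :=
    hAmax {i0} (Finset.mem_filter.mpr ⟨Finset.mem_univ _, hsingle i0⟩)
  have hAK : A.card ≤ K := by
    by_contra h
    obtain ⟨B, hBA, hBcard⟩ := Finset.exists_subset_card_eq (by omega : K + 1 ≤ A.card)
    exact hnoind B hBcard fun i hi j hj hij => hPA i (hBA hi) j (hBA hj) hij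
  -- every vertex outside A has a big-intersection neighbor in A
  have hout : ∀ j : I, j ∉ A → ∃ i, i ∈ A ∧ i ≠ j ∧ t * m ≤ ((S i ∩ S j).card : ℝ) := by
    intro j hjA
    have hnP : ¬ P (insert j A) := by
      intro h
      have := hAmax _ (Finset.mem_filter.mpr ⟨Finset.mem_univ _, h⟩)
      rw [Finset.card_insert_of_notMem hjA] at this
      omega
    simp only [hPdef] at hnP
    push_neg at hnP
    obtain ⟨i, hi, i', hi', hne, hge⟩ := hnP
    rcases Finset.mem_insert.mp hi with rfl | hiA
    · rcases Finset.mem_insert.mp hi' with rfl | hi'A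
      · exact absurd rfl hne
      · exact ⟨i', hi'A, fun h => hne h.symm, by rwa [Finset.inter_comm]⟩
    · rcases Finset.mem_insert.mp hi' with rfl | hi'A
      · exact ⟨i, hiA, hne, hge⟩
      · exact absurd hge (not_le.mpr (hPA i hiA i' hi'A hne))
  choose f hf1 hf2 hf3 using hout
  set f' : I → I := fun j => if h : j ∈ A then j else f j h with hf'def
  have hfib : (Finset.univ \ A).card
      = ∑ i ∈ A, ((Finset.univ \ A).filter (fun j => f' j = i)).card := by
    apply Finset.card_eq_sum_card_fiberwise
    intro j hj
    have hjA : j ∉ A := (Finset.mem_sdiff.mp hj).2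
    simp only [hf'def, dif_neg hjA]
    exact hf1 j hjA
  obtain ⟨i, hiA, hmax2⟩ := Finset.exists_max_image A
    (fun i => ((Finset.univ \ A).filter (fun j => f' j = i)).card) (Finset.card_pos.mp hA1)
  refine ⟨i, ?_⟩
  set D := Finset.univ.filter (fun j => j ≠ i ∧ t * m ≤ ((S i ∩ S j).card : ℝ)) with hDdef
  have hfibD : ((Finset.univ \ A).filter (fun j => f' j = i)) ⊆ D := by
    intro j hj
    obtain ⟨hj1, hj2⟩ := Finset.mem_filter.mp hj
    have hjA : j ∉ A := (Finset.mem_sdiff.mp hj1).2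
    have hfj : f j hjA = i := by simpa [hf'def, dif_neg hjA] using hj2
    refine Finset.mem_filter.mpr ⟨Finset.mem_univ _, ?_, ?_⟩
    · intro h; exact hf2 j hjA (by rw [hfj, h])
    · have := hf3 j hjA; rwa [hfj] at this
  have hD : ((Finset.univ \ A).filter (fun j => f' j = i)).card ≤ D.card :=
    Finset.card_le_card hfibD
  have hsum : (Finset.univ \ A).card
      ≤ A.card * ((Finset.univ \ A).filter (fun j => f' j = i)).card := by
    rw [hfib]
    calc ∑ i' ∈ A, ((Finset.univ \ A).filter (fun j => f' j = i')).card
        ≤ ∑ _i' ∈ A, ((Finset.univ \ A).filter (fun j => f' j = i)).card :=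
          Finset.sum_le_sum hmax2
      _ = A.card * _ := by rw [Finset.sum_const, smul_eq_mul]
  have hsd : (Finset.univ \ A).card = Fintype.card I - A.card := by
    rw [Finset.card_sdiff_of_subset (Finset.subset_univ A), Finset.card_univ]
  have hAn : A.card ≤ Fintype.card I := Finset.card_le_univ A
  have hKD : A.card * ((Finset.univ \ A).filter (fun j => f' j = i)).card ≤ K * D.card :=
    Nat.mul_le_mul hAK hD
  have hN : Fintype.card I ≤ K * D.card + K := by omega
  have hNat : (Nat.card {j : I // j ≠ i ∧ t * m ≤ ((S i ∩ S j).card : ℝ)}) = D.card := by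
    rw [Nat.card_eq_fintype_card, hDdef]
    exact Fintype.card_subtype _
  rw [hNat, div_le_iff₀ hK0R]
  have hfin : (Fintype.card I : ℝ) ≤ (K : ℝ) * (D.card : ℝ) + K := by exact_mod_cast hN
  linarith
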